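/- Let η, β, ρ, δ, φ > 0 with ηβ ≤ 1, and define h(x) = (δ/β)((ηβ+1)^x − 1) − ηδx and Ḡ(τ) = √(ρh(τ)/(ηφτ)) + ρh(τ). Then Ḡ, restricted to positive integers, attains its minimum uniquely at τ = 1; that is, Ḡ(1) = 0 and Ḡ(1) < Ḡ(τ) for every integer τ ≥ 2. (This is the infinite-resource-budget limit of the control objective G(τ), so the optimal aggregation period tends to 1 as the resource budget grows.) -/

import Mathlib

/-- The gap function `h(x) = (δ/β)((ηβ+1)^x - 1) - ηδx` for natural `x`. -/
noncomputable def hGap (η β δ : ℝ) (x : ℕ) : ℝ :=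
  δ / β * ((η * β + 1) ^ x - 1) - η * δ * x

/-- The infinite-resource-budget limit of the control objective:
`Ḡ(τ) = √(ρh(τ)/(ηφτ)) + ρh(τ)`. -/
noncomputable def GbarObj (η β ρ δ φ : ℝ) (τ : ℕ) : ℝ :=
  Real.sqrt (ρ * hGap η β δ τ / (η * φ * τ)) + ρ * hGap η β δ τ

lemma bernoulli_strict {a : ℝ} (ha : 0 < a) : ∀ n : ℕ, 2 ≤ n → 1 + n * a < (1 + a) ^ n := by
  intro n hn
  induction n, hn using Nat.le_induction with
  | base => push_cast; nlinarith
  | succ n hn ih =>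
      have h1 : (1 + a) ^ (n + 1) = (1 + a) ^ n * (1 + a) := by ring
      have h2 := mul_lt_mul_of_pos_right ih (show (0:ℝ) < 1 + a by linarith)
      push_cast
      nlinarith [mul_nonneg (mul_nonneg (Nat.cast_nonneg (α := ℝ) n) ha.le) ha.le]

/-- with `η, β, ρ, δ, φ > 0` and `ηβ ≤ 1`, the function `Ḡ`, restricted to
positive integers, attains its minimum uniquely at `τ = 1`: `Ḡ(1) = 0` and
`Ḡ(1) < Ḡ(τ)` for every integer `τ ≥ 2`. -/
theorem Gbar_min_at_one
    (η β ρ δ φ : ℝ)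
    (hη : 0 < η) (hβ : 0 < β) (hρ : 0 < ρ) (hδ : 0 < δ) (hφ : 0 < φ)
    (hηβ : η * β ≤ 1) :
    GbarObj η β ρ δ φ 1 = 0 ∧
    ∀ τ : ℕ, 2 ≤ τ → GbarObj η β ρ δ φ 1 < GbarObj η β ρ δ φ τ := by
  have h1 : hGap η β δ 1 = 0 := by
    unfold hGap
    field_simp
    ring
  have hG1 : GbarObj η β ρ δ φ 1 = 0 := by
    simp [GbarObj, h1]
  refine ⟨hG1, fun τ hτ => ?_⟩
  rw [hG1]
  have hb : 0 < η * β := mul_pos hη hβ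
  have hbern := bernoulli_strict hb τ hτ
  have hh : 0 < hGap η β δ τ := by
    have h2 : (η * β * τ) * (δ / β) < ((1 + η * β) ^ τ - 1) * (δ / β) := by
      apply mul_lt_mul_of_pos_right _ (div_pos hδ hβ)
      linarith
    have h3 : (η * β * τ) * (δ / β) = η * δ * τ := by field_simp
    have h4 : (1 + η * β) ^ τ = (η * β + 1) ^ τ := by ring_nf
    unfold hGap
    rw [← h4]
    linarith
  have hτpos : (0:ℝ) < τ := by positivity
  have : 0 < ρ * hGap η β δ τ := mul_pos hρ hh
  have hs : 0 ≤ Real.sqrt (ρ * hGap η β δ τ / (η * φ * τ)) := Real.sqrt_nonneg _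
  unfold GbarObj
  linarith
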